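/- Let M = M_{p,bp} be a local singular ACM with α = β = 1. Then the catenary degree of M is 2. -/

import Mathlib

/-- Membership in the arithmetical congruence monoid `M_{a,b} = (a + b ℕ₀) ∪ {1}`. -/
def acmMem (a b x : ℕ) : Prop := x = 1 ∨ ∃ k : ℕ, x = a + k * b

/-- `x` is an atom (irreducible) of `M_{a,b}`. -/
def acmAtom (a b x : ℕ) : Prop :=
  acmMem a b x ∧ x ≠ 1 ∧
    ∀ y z : ℕ, acmMem a b y → acmMem a b z → x = y * z → y = 1 ∨ z = 1

/-- `s` is a factorization of `x` into atoms of `M_{a,b}`. -/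
def acmFactorization (a b x : ℕ) (s : Multiset ℕ) : Prop :=
  (∀ u ∈ s, acmAtom a b u) ∧ s.prod = x

/-- The distance between two factorizations. -/
def facDist (s t : Multiset ℕ) : ℕ := max (Multiset.card (s - t)) (Multiset.card (t - s))

/-- There is an `N`-chain of factorizations of `x` from `z₁` to `z₂` in `M_{a,b}`. -/
def acmNChain (a b x N : ℕ) (z₁ z₂ : Multiset ℕ) : Prop :=
  ∃ L : List (Multiset ℕ), L ≠ [] ∧ L.head? = some z₁ ∧ L.getLast? = some z₂ ∧
    (∀ z ∈ L, acmFactorization a b x z) ∧ L.Chain' (fun s t => facDist s t ≤ N)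

/-- The set of `N` such that any two factorizations of any element of `M_{a,b}`
are connected by an `N`-chain; `c(M) = n` iff `n` is the least element of this set. -/
def acmCatSet (a b : ℕ) : Set ℕ :=
  {N | ∀ x, acmMem a b x → ∀ z₁ z₂, acmFactorization a b x z₁ →
      acmFactorization a b x z₂ → acmNChain a b x N z₁ z₂}

/-- Divisibility inside the monoid `M_{a,b}`. -/
def acmDvd (a b x y : ℕ) : Prop := ∃ k, acmMem a b k ∧ x * k = y

/-- `s` is a bullet of `x` in `M_{a,b}`. -/
def acmBullet (a b x : ℕ) (s : Multiset ℕ) : Prop :=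
  (∀ u ∈ s, acmAtom a b u) ∧ acmDvd a b x s.prod ∧
    ∀ t : Multiset ℕ, t ≤ s → t ≠ s → ¬ acmDvd a b x t.prod

/-- Omega primality of `x` in `M_{a,b}`: the sup of the lengths of bullets of `x`. -/
noncomputable def acmOmega (a b x : ℕ) : ℕ∞ :=
  sSup {n : ℕ∞ | ∃ s : Multiset ℕ, acmBullet a b x s ∧ (Multiset.card s : ℕ∞) = n}

/-- The set of factorization lengths of `x` in `M_{a,b}`. -/
def acmLengthSet (a b x : ℕ) : Set ℕ :=
  {n | ∃ s : Multiset ℕ, acmFactorization a b x s ∧ Multiset.card s = n}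

/-- `x` has at least two distinct factorization lengths. -/
def acmLI (a b x : ℕ) : Prop := ∃ m ∈ acmLengthSet a b x, ∃ n ∈ acmLengthSet a b x, m ≠ n

/-- The length density of an element `x` of `M_{a,b}`. -/
noncomputable def acmLD (a b x : ℕ) : ℝ :=
  (((acmLengthSet a b x).ncard : ℝ) - 1) /
    (((sSup (acmLengthSet a b x) : ℕ) : ℝ) - ((sInf (acmLengthSet a b x) : ℕ) : ℝ))

namespace LocalACM

open Multiset

variable {p b : ℕ}

lemma mem_iff' (x : ℕ) :
    acmMem p (b * p) x ↔ x = 1 ∨ ∃ m, 1 ≤ m ∧ m % b = 1 % b ∧ x = p * m := by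
  constructor
  · rintro (rfl | ⟨k, rfl⟩)
    · exact Or.inl rfl
    · refine Or.inr ⟨1 + k * b, by omega, ?_, by ring⟩
      exact Nat.add_mul_mod_self_right 1 k b
  · rintro (rfl | ⟨m, hm1, hmb, rfl⟩)
    · exact Or.inl rfl
    · right
      obtain ⟨k, hk⟩ : b ∣ m - 1 := (Nat.modEq_iff_dvd' hm1).mp hmb.symm
      refine ⟨k, ?_⟩
      have hm : m = 1 + b * k := by omega
      rw [hm]; ring

lemma atom_iff (hp : p.Prime) (hpb : p % b = 1 % b) (x : ℕ) :
    acmAtom p (b * p) x ↔ ∃ c, ¬ p ∣ c ∧ c % b = 1 % b ∧ x = p * c := by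
  constructor
  · rintro ⟨hmem, hne, hsplit⟩
    rcases (mem_iff' x).mp hmem with rfl | ⟨m, hm1, hmb, rfl⟩
    · exact absurd rfl hne
    · by_cases hpm : p ∣ m
      · exfalso
        obtain ⟨m', rfl⟩ := hpm
        have hm'1 : 1 ≤ m' := by
          rcases Nat.eq_zero_or_pos m' with h | h
          · subst h; simp at hm1
          · exact h
        have hy : acmMem p (b * p) p :=
          (mem_iff' p).mpr (Or.inr ⟨1, le_refl 1, rfl, (mul_one p).symm⟩)
        have hz : acmMem p (b * p) (p * m') := by
          refine (mem_iff' _).mpr (Or.inr ⟨m', hm'1, ?_, rfl⟩)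
          have h1 : (p * m') % b = (1 * m') % b := Nat.ModEq.mul hpb rfl
          rw [one_mul] at h1
          omega
        rcases hsplit p (p * m') hy hz rfl with h | h
        · exact hp.one_lt.ne' h
        · have : p ∣ 1 := ⟨m', h.symm⟩
          exact hp.one_lt.ne' (Nat.dvd_one.mp this)
      · exact ⟨m, hpm, hmb, rfl⟩
  · rintro ⟨c, hpc, hcb, rfl⟩
    have hc1 : 1 ≤ c := by
      rcases Nat.eq_zero_or_pos c with h | h
      · subst h; exact absurd (dvd_zero p) hpc
      · exact h
    refine ⟨(mem_iff' _).mpr (Or.inr ⟨c, hc1, hcb, rfl⟩), ?_, ?_⟩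
    · intro h
      have : p ∣ 1 := ⟨c, h.symm⟩
      exact hp.one_lt.ne' (Nat.dvd_one.mp this)
    · intro y z hy hz hxyz
      by_contra hcon
      push_neg at hcon
      rcases (mem_iff' y).mp hy with rfl | ⟨m₁, hm₁1, hm₁b, rfl⟩
      · exact hcon.1 rfl
      rcases (mem_iff' z).mp hz with rfl | ⟨m₂, hm₂1, hm₂b, rfl⟩
      · exact hcon.2 rfl
      have heq : p * c = p * (p * (m₁ * m₂)) := by rw [hxyz]; ring
      have hc : c = p * (m₁ * m₂) := Nat.eq_of_mul_eq_mul_left hp.pos heq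
      exact hpc ⟨m₁ * m₂, hc⟩

lemma not_p_dvd_one (hp : p.Prime) : ¬ p ∣ 1 :=
  fun h => hp.one_lt.ne' (Nat.dvd_one.mp h)

lemma atom_p (hp : p.Prime) (hpb : p % b = 1 % b) : acmAtom p (b * p) p :=
  (atom_iff hp hpb p).mpr ⟨1, not_p_dvd_one hp, rfl, (mul_one p).symm⟩

lemma atom_two_le (hp : p.Prime) (hpb : p % b = 1 % b) {u : ℕ}
    (hu : acmAtom p (b * p) u) : 2 ≤ u := by
  obtain ⟨c, hpc, _, rfl⟩ := (atom_iff hp hpb u).mp hu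
  have hc1 : 1 ≤ c := by
    rcases Nat.eq_zero_or_pos c with h | h
    · subst h; exact absurd (dvd_zero p) hpc
    · exact h
  calc 2 ≤ p := hp.two_le
    _ = p * 1 := (mul_one p).symm
    _ ≤ p * c := Nat.mul_le_mul_left p hc1

lemma mem_mul {y z : ℕ} (hp : p.Prime) (hpb : p % b = 1 % b)
    (hy : acmMem p (b * p) y) (hz : acmMem p (b * p) z) : acmMem p (b * p) (y * z) := by
  rcases (mem_iff' y).mp hy with rfl | ⟨m₁, hm₁1, hm₁b, rfl⟩
  · simpa using hz
  rcases (mem_iff' z).mp hz with rfl | ⟨m₂, hm₂1, hm₂b, rfl⟩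
  · simpa using hy
  refine (mem_iff' _).mpr (Or.inr ⟨p * (m₁ * m₂), ?_, ?_, by ring⟩)
  · exact Nat.mul_pos hp.pos (Nat.mul_pos hm₁1 hm₂1)
  · have h := Nat.ModEq.mul (hpb : p ≡ 1 [MOD b]) (Nat.ModEq.mul hm₁b hm₂b)
    simpa [Nat.ModEq] using h

lemma prod_mem (hp : p.Prime) (hpb : p % b = 1 % b) (s : Multiset ℕ)
    (hs : ∀ u ∈ s, acmAtom p (b * p) u) : acmMem p (b * p) s.prod := by
  induction s using Multiset.induction with
  | empty => exact Or.inl (by simp)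
  | cons a s ih =>
    rw [Multiset.prod_cons]
    exact mem_mul hp hpb (hs a (Multiset.mem_cons_self a s)).1
      (ih fun u hu => hs u (Multiset.mem_cons_of_mem hu))

lemma fact_one (hp : p.Prime) (hpb : p % b = 1 % b) {s : Multiset ℕ}
    (hs : acmFactorization p (b * p) 1 s) : s = 0 := by
  by_contra h
  obtain ⟨u, hu⟩ := Multiset.exists_mem_of_ne_zero h
  have hdvd : u ∣ s.prod := Multiset.dvd_prod hu
  rw [hs.2] at hdvd
  have h1 : u = 1 := Nat.dvd_one.mp hdvd
  have := atom_two_le hp hpb (hs.1 u hu)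
  omega

lemma exists_cpart (hp : p.Prime) (hpb : p % b = 1 % b) (s : Multiset ℕ)
    (hs : ∀ u ∈ s, acmAtom p (b * p) u) :
    ∃ C, ¬ p ∣ C ∧ s.prod = p ^ (Multiset.card s) * C := by
  induction s using Multiset.induction with
  | empty => exact ⟨1, not_p_dvd_one hp, by simp⟩
  | cons a s ih =>
    obtain ⟨C, hC, hCeq⟩ := ih fun u hu => hs u (Multiset.mem_cons_of_mem hu)
    obtain ⟨c, hpc, _, rfl⟩ := (atom_iff hp hpb a).mp (hs a (Multiset.mem_cons_self a s))
    refine ⟨c * C, ?_, ?_⟩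
    · intro h
      rcases (Nat.Prime.dvd_mul hp).mp h with h | h
      · exact hpc h
      · exact hC h
    · rw [Multiset.prod_cons, hCeq, Multiset.card_cons, pow_succ]
      ring

lemma card_eq_of_facts (hp : p.Prime) (hpb : p % b = 1 % b) {x : ℕ} {s t : Multiset ℕ}
    (hs : acmFactorization p (b * p) x s) (ht : acmFactorization p (b * p) x t) :
    Multiset.card s = Multiset.card t := by
  obtain ⟨C₁, hC₁, h₁⟩ := exists_cpart hp hpb s hs.1
  obtain ⟨C₂, hC₂, h₂⟩ := exists_cpart hp hpb t ht.1
  have key : ∀ (n C : ℕ), ¬ p ∣ C → (p ^ n * C).factorization p = n := by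
    intro n C hC
    have hC0 : C ≠ 0 := fun h => hC (h ▸ dvd_zero p)
    rw [Nat.factorization_mul (pow_ne_zero n hp.pos.ne') hC0]
    simp [hp.factorization_pow, Nat.factorization_eq_zero_of_not_dvd hC]
  have hx : p ^ (Multiset.card s) * C₁ = p ^ (Multiset.card t) * C₂ := by
    rw [← h₁, ← h₂, hs.2, ht.2]
  have := congrArg (fun y => y.factorization p) hx
  simpa [key _ _ hC₁, key _ _ hC₂] using this

/-- The elementary symmetric relation whose refl-trans closure we build. -/
def Rel (a q x : ℕ) (s t : Multiset ℕ) : Prop :=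
  facDist s t ≤ 2 ∧ acmFactorization a q x s ∧ acmFactorization a q x t

lemma rel_symm {a q x : ℕ} : Symmetric (Rel a q x) := by
  rintro s t ⟨h, hs, ht⟩
  refine ⟨?_, ht, hs⟩
  rw [facDist, max_comm]
  exact h

lemma nchain_single {a q x N : ℕ} {z : Multiset ℕ}
    (hz : acmFactorization a q x z) : acmNChain a q x N z z :=
  ⟨[z], by simp, rfl, rfl, by simpa using hz, List.isChain_singleton z⟩

lemma nchain_head {a q x N : ℕ} {z₀ z₁ z₂ : Multiset ℕ}
    (h0 : acmFactorization a q x z₀) (hd : facDist z₀ z₁ ≤ N)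
    (h : acmNChain a q x N z₁ z₂) : acmNChain a q x N z₀ z₂ := by
  obtain ⟨L, hne, hhd, hlast, hall, hch⟩ := h
  refine ⟨z₀ :: L, by simp, rfl, ?_, ?_, ?_⟩
  · cases L with
    | nil => exact absurd rfl hne
    | cons l ls => rw [List.getLast?_cons_cons]; exact hlast
  · intro z hz
    rcases List.mem_cons.mp hz with rfl | hz
    · exact h0
    · exact hall z hz
  · refine List.isChain_cons.mpr ⟨?_, hch⟩
    intro y hy
    rw [hhd] at hy
    obtain rfl : z₁ = y := by simpa using hy
    exact hd

lemma rtg_nchain {a q x : ℕ} {z₁ z₂ : Multiset ℕ}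
    (h : Relation.ReflTransGen (Rel a q x) z₁ z₂) :
    acmFactorization a q x z₁ → acmNChain a q x 2 z₁ z₂ := by
  induction h using Relation.ReflTransGen.head_induction_on with
  | refl => exact fun h1 => nchain_single h1
  | head h' _ ih => exact fun h0 => nchain_head h0 h'.1 (ih h'.2.2)

lemma cons_dist (a : ℕ) (s t : Multiset ℕ) :
    facDist (a ::ₘ s) (a ::ₘ t) = facDist s t := by
  have h1 : ∀ u v : Multiset ℕ, a ::ₘ u - (a ::ₘ v) = u - v := by
    intro u v
    rw [← Multiset.singleton_add, ← Multiset.singleton_add,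
      add_tsub_add_eq_tsub_left]
  rw [facDist, facDist, h1, h1]

lemma to_canonical (hp : p.Prime) (hpb : p % b = 1 % b) :
    ∀ (n x C : ℕ) (s : Multiset ℕ), acmFactorization p (b * p) x s →
      Multiset.card s = n + 1 → x = p ^ (n + 1) * C →
      Relation.ReflTransGen (Rel p (b * p) x) s
        (Multiset.replicate n p + {p * C}) := by
  intro n
  induction n with
  | zero =>
    intro x C s hs hcard hxC
    obtain ⟨a, rfl⟩ := Multiset.card_eq_one.mp hcard
    have ha : a = p * C := by
      have h := hs.2
      rw [Multiset.prod_singleton] at h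
      rw [h, hxC, pow_one]
    have hend : (Multiset.replicate 0 p + {p * C} : Multiset ℕ) = {a} := by
      rw [ha]; simp
    rw [hend]
  | succ n ih =>
    intro x C s hs hcard hxC
    obtain ⟨u, s₁, rfl⟩ : ∃ u s₁, s = u ::ₘ s₁ := by
      have : s ≠ 0 := by
        intro h; rw [h] at hcard; simp at hcard
      obtain ⟨u, hu⟩ := Multiset.exists_mem_of_ne_zero this
      obtain ⟨s₁, rfl⟩ := Multiset.exists_cons_of_mem hu
      exact ⟨u, s₁, rfl⟩
    obtain ⟨v, r, rfl⟩ : ∃ v r, s₁ = v ::ₘ r := by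
      have : s₁ ≠ 0 := by
        intro h; rw [h] at hcard; simp at hcard
      obtain ⟨v, hv⟩ := Multiset.exists_mem_of_ne_zero this
      obtain ⟨r, rfl⟩ := Multiset.exists_cons_of_mem hv
      exact ⟨v, r, rfl⟩
    have hu : acmAtom p (b * p) u := hs.1 u (Multiset.mem_cons_self _ _)
    have hv : acmAtom p (b * p) v :=
      hs.1 v (Multiset.mem_cons_of_mem (Multiset.mem_cons_self _ _))
    obtain ⟨c₁, hpc₁, hc₁b, rfl⟩ := (atom_iff hp hpb u).mp hu
    obtain ⟨c₂, hpc₂, hc₂b, rfl⟩ := (atom_iff hp hpb v).mp hv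
    have hatom12 : acmAtom p (b * p) (p * (c₁ * c₂)) := by
      refine (atom_iff hp hpb _).mpr ⟨c₁ * c₂, ?_, ?_, rfl⟩
      · intro h
        rcases (Nat.Prime.dvd_mul hp).mp h with h | h
        · exact hpc₁ h
        · exact hpc₂ h
      · have h := Nat.ModEq.mul (hc₁b : c₁ ≡ 1 [MOD b]) (hc₂b : c₂ ≡ 1 [MOD b])
        simpa [Nat.ModEq] using h
    set t : Multiset ℕ := p ::ₘ (p * (c₁ * c₂)) ::ₘ r with ht
    have hft : acmFactorization p (b * p) x t := by
      constructor
      · intro z hz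
        rcases Multiset.mem_cons.mp hz with rfl | hz
        · exact atom_p hp hpb
        rcases Multiset.mem_cons.mp hz with rfl | hz
        · exact hatom12
        · exact hs.1 z (Multiset.mem_cons_of_mem (Multiset.mem_cons_of_mem hz))
      · have h := hs.2
        rw [Multiset.prod_cons, Multiset.prod_cons] at h
        rw [ht, Multiset.prod_cons, Multiset.prod_cons, ← h]
        ring
    have hstep : Rel p (b * p) x (p * c₁ ::ₘ p * c₂ ::ₘ r) t := by
      refine ⟨?_, hs, hft⟩
      have h1 : (p * c₁ ::ₘ p * c₂ ::ₘ r) = ({p * c₁, p * c₂} : Multiset ℕ) + r := by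
        simp [Multiset.insert_eq_cons, Multiset.cons_add, Multiset.singleton_add]
      have h2 : t = ({p, p * (c₁ * c₂)} : Multiset ℕ) + r := by
        simp [ht, Multiset.insert_eq_cons, Multiset.cons_add, Multiset.singleton_add]
      rw [facDist, h1, h2, add_tsub_add_eq_tsub_right, add_tsub_add_eq_tsub_right]
      refine max_le ?_ ?_
      · calc Multiset.card (({p * c₁, p * c₂} : Multiset ℕ) - {p, p * (c₁ * c₂)})
            ≤ Multiset.card ({p * c₁, p * c₂} : Multiset ℕ) :=
              Multiset.card_le_card tsub_le_self
          _ = 2 := by simp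
      · calc Multiset.card (({p, p * (c₁ * c₂)} : Multiset ℕ) - {p * c₁, p * c₂})
            ≤ Multiset.card ({p, p * (c₁ * c₂)} : Multiset ℕ) :=
              Multiset.card_le_card tsub_le_self
          _ = 2 := by simp
    set r' : Multiset ℕ := (p * (c₁ * c₂)) ::ₘ r with hr'
    have hxpr : x = p * r'.prod := by
      have h := hs.2
      rw [Multiset.prod_cons, Multiset.prod_cons] at h
      rw [hr', Multiset.prod_cons, ← h]
      ring
    have hy : r'.prod = p ^ (n + 1) * C := by
      have h1 : p * r'.prod = p * (p ^ (n + 1) * C) := by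
        rw [← hxpr, hxC]; ring
      exact Nat.eq_of_mul_eq_mul_left hp.pos h1
    have hfr' : acmFactorization p (b * p) r'.prod r' := by
      refine ⟨?_, rfl⟩
      intro z hz
      rcases Multiset.mem_cons.mp hz with rfl | hz
      · exact hatom12
      · exact hs.1 z (Multiset.mem_cons_of_mem (Multiset.mem_cons_of_mem hz))
    have hcard' : Multiset.card r' = n + 1 := by
      rw [hr', Multiset.card_cons]
      rw [Multiset.card_cons, Multiset.card_cons] at hcard
      omega
    have hrtg := ih r'.prod C r' hfr' hcard' hy
    have hlift : Relation.ReflTransGen (Rel p (b * p) x) (p ::ₘ r')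
        (p ::ₘ (Multiset.replicate n p + {p * C})) := by
      refine Relation.ReflTransGen.lift (fun m => p ::ₘ m) ?_ _ _ hrtg
      rintro a' b' ⟨hd, ha', hb'⟩
      refine ⟨?_, ?_, ?_⟩
      · rw [cons_dist]; exact hd
      · refine ⟨?_, ?_⟩
        · intro z hz
          rcases Multiset.mem_cons.mp hz with rfl | hz
          · exact atom_p hp hpb
          · exact ha'.1 z hz
        · rw [Multiset.prod_cons, ha'.2, ← hxpr]
      · refine ⟨?_, ?_⟩
        · intro z hz
          rcases Multiset.mem_cons.mp hz with rfl | hz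
          · exact atom_p hp hpb
          · exact hb'.1 z hz
        · rw [Multiset.prod_cons, hb'.2, ← hxpr]
    have hend : p ::ₘ (Multiset.replicate n p + {p * C})
        = Multiset.replicate (n + 1) p + {p * C} := by
      rw [Multiset.replicate_succ, Multiset.cons_add]
    rw [hend] at hlift
    exact Relation.ReflTransGen.head hstep hlift

lemma eq_of_dist_le_one (hp : p.Prime) (hpb : p % b = 1 % b) {x : ℕ} {s t : Multiset ℕ}
    (hs : acmFactorization p (b * p) x s) (ht : acmFactorization p (b * p) x t)
    (hd : facDist s t ≤ 1) : s = t := by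
  classical
  have h2s : ∀ u ∈ s, 2 ≤ u := fun u hu => atom_two_le hp hpb (hs.1 u hu)
  have h2t : ∀ u ∈ t, 2 ≤ u := fun u hu => atom_two_le hp hpb (ht.1 u hu)
  have hsplit_s : s.prod = (s - t).prod * (s ∩ t).prod := by
    rw [← Multiset.prod_add, Multiset.sub_add_inter]
  have hsplit_t : t.prod = (t - s).prod * (s ∩ t).prod := by
    rw [← Multiset.prod_add, Multiset.inter_comm, Multiset.sub_add_inter]
  have hpos : 0 < (s ∩ t).prod := by
    rw [CanonicallyOrderedAdd.multiset_prod_pos]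
    intro a ha
    have : a ∈ s := Multiset.mem_of_le (Multiset.inter_le_left (s := s) (t := t)) ha
    have := h2s a this
    omega
  have hprod_eq : (s - t).prod = (t - s).prod := by
    have h : (s - t).prod * (s ∩ t).prod = (t - s).prod * (s ∩ t).prod := by
      rw [← hsplit_s, ← hsplit_t, hs.2, ht.2]
    exact Nat.eq_of_mul_eq_mul_right hpos h
  have hc1 : Multiset.card (s - t) ≤ 1 := le_trans (le_max_left _ _) hd
  have hc2 : Multiset.card (t - s) ≤ 1 := le_trans (le_max_right _ _) hd
  rcases Nat.le_one_iff_eq_zero_or_eq_one.mp hc1 with h1 | h1 <;>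
    rcases Nat.le_one_iff_eq_zero_or_eq_one.mp hc2 with h2 | h2
  · -- both zero
    have hst : s ≤ t := by
      have := Multiset.card_eq_zero.mp h1
      exact tsub_eq_zero_iff_le.mp this
    have hts : t ≤ s := by
      have := Multiset.card_eq_zero.mp h2
      exact tsub_eq_zero_iff_le.mp this
    exact le_antisymm hst hts
  · -- s - t = 0, card (t - s) = 1
    exfalso
    obtain ⟨a, ha⟩ := Multiset.card_eq_one.mp h2
    have h0 : (s - t) = 0 := Multiset.card_eq_zero.mp h1
    rw [h0, ha] at hprod_eq
    simp at hprod_eq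
    have hat : a ∈ t := Multiset.mem_of_le tsub_le_self (by rw [ha]; simp)
    have := h2t a hat
    omega
  · -- card (s - t) = 1, t - s = 0
    exfalso
    obtain ⟨a, ha⟩ := Multiset.card_eq_one.mp h1
    have h0 : (t - s) = 0 := Multiset.card_eq_zero.mp h2
    rw [h0, ha] at hprod_eq
    simp at hprod_eq
    have has : a ∈ s := Multiset.mem_of_le tsub_le_self (by rw [ha]; simp)
    have := h2s a has
    omega
  · -- both cards 1
    exfalso
    obtain ⟨a, ha⟩ := Multiset.card_eq_one.mp h1
    obtain ⟨a', ha'⟩ := Multiset.card_eq_one.mp h2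
    rw [ha, ha'] at hprod_eq
    simp at hprod_eq
    subst hprod_eq
    have hca : Multiset.count a (s - t) = 1 := by rw [ha]; simp
    have hca' : Multiset.count a (t - s) = 1 := by rw [ha']; simp
    rw [Multiset.count_sub] at hca hca'
    omega

lemma chain_const (hp : p.Prime) (hpb : p % b = 1 % b) {x : ℕ} :
    ∀ (L : List (Multiset ℕ)), (∀ z ∈ L, acmFactorization p (b * p) x z) →
      L.Chain' (fun s t => facDist s t ≤ 1) →
      ∀ z₁ z₂, L.head? = some z₁ → L.getLast? = some z₂ → z₁ = z₂ := by
  intro L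
  induction L with
  | nil => intro _ _ z₁ z₂ h _; simp at h
  | cons hd tl ih =>
    intro hall hch z₁ z₂ hhd hlast
    obtain rfl : hd = z₁ := by simpa using hhd
    cases tl with
    | nil => simpa using hlast
    | cons c L' =>
      have hac : facDist hd c ≤ 1 := (List.isChain_cons_cons.mp hch).1
      have hfa : acmFactorization p (b * p) x hd := hall hd (by simp)
      have hfc : acmFactorization p (b * p) x c := hall c (by simp)
      have heq : hd = c := eq_of_dist_le_one hp hpb hfa hfc hac
      have hch' : (c :: L').Chain' (fun s t => facDist s t ≤ 1) :=
        (List.isChain_cons_cons.mp hch).2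
      have hlast' : (c :: L').getLast? = some z₂ := by
        rw [List.getLast?_cons_cons] at hlast
        exact hlast
      have hrec := ih (fun z hz => hall z (List.mem_cons_of_mem _ hz)) hch' c z₂ rfl hlast'
      rw [heq, hrec]

end LocalACM

/-- The local singular ACM `M = M_{p, bp}` (with `α = β = 1`) has
catenary degree 2. -/
theorem local_catenary_alpha_beta_one (p b : ℕ) (hp : p.Prime) (hb : 0 < b)
    (hacm : p * p ≡ p [MOD b * p]) :
    IsLeast (acmCatSet p (b * p)) 2 := by
  have hp2 : 2 ≤ p := hp.two_le
  -- from the congruence: p ≡ 1 mod b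
  have hpb : p % b = 1 % b := by
    have h1 : b * p ∣ p * p - p :=
      (Nat.modEq_iff_dvd' (Nat.le_mul_of_pos_left p hp.pos)).mp hacm.symm
    obtain ⟨k, hk⟩ := h1
    have hps : p * p - p = p * (p - 1) := by
      obtain ⟨m, hm⟩ : ∃ m, p = m + 1 := ⟨p - 1, by omega⟩
      subst hm
      simp [Nat.mul_succ]
    rw [hps] at hk
    have hk' : p * (p - 1) = p * (b * k) := by rw [hk]; ring
    have hbk : p - 1 = b * k := Nat.eq_of_mul_eq_mul_left hp.pos hk'
    have hpeq : p = 1 + b * k := by omega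
    rw [hpeq]
    exact Nat.add_mul_mod_self_left 1 b k
  constructor
  · -- 2 is in the catenary set
    intro x hx z₁ z₂ h1 h2
    by_cases hz : z₁ = 0
    · subst hz
      have hx1 : x = 1 := by simpa using h1.2.symm
      have hz2 : z₂ = 0 := LocalACM.fact_one hp hpb (hx1 ▸ h2)
      subst hz2
      exact LocalACM.nchain_single h1
    · have hz2 : z₂ ≠ 0 := by
        intro h
        subst h
        have hx1 : x = 1 := by simpa using h2.2.symm
        exact hz (LocalACM.fact_one hp hpb (hx1 ▸ h1))
      obtain ⟨C₁, hC₁, hx₁⟩ := LocalACM.exists_cpart hp hpb z₁ h1.1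
      obtain ⟨C₂, hC₂, hx₂⟩ := LocalACM.exists_cpart hp hpb z₂ h2.1
      have hcard : Multiset.card z₁ = Multiset.card z₂ :=
        LocalACM.card_eq_of_facts hp hpb h1 h2
      obtain ⟨n, hn⟩ : ∃ n, Multiset.card z₁ = n + 1 := by
        have : Multiset.card z₁ ≠ 0 := fun h => hz (Multiset.card_eq_zero.mp h)
        exact ⟨Multiset.card z₁ - 1, by omega⟩
      have hn₂ : Multiset.card z₂ = n + 1 := by omega
      have hxeq : x = p ^ (n + 1) * C₁ := by rw [← hn, ← hx₁, h1.2]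
      have hxeq₂ : x = p ^ (n + 1) * C₂ := by rw [← hn₂, ← hx₂, h2.2]
      have hCeq : C₁ = C₂ :=
        Nat.eq_of_mul_eq_mul_left (pow_pos hp.pos _) (hxeq.symm.trans hxeq₂)
      have hrtg₁ := LocalACM.to_canonical hp hpb n x C₁ z₁ h1 hn hxeq
      have hrtg₂ := LocalACM.to_canonical hp hpb n x C₁ z₂ h2 hn₂ hxeq
      have hrtg₂' := (@Relation.ReflTransGen.symmetric _ _ ⟨LocalACM.rel_symm⟩).symm _ _ hrtg₂
      exact LocalACM.rtg_nchain (hrtg₁.trans hrtg₂') h1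
  · -- 2 is a lower bound
    intro N hN
    by_contra hcon
    push_neg at hcon
    have hN1 : N ≤ 1 := by omega
    set q : ℕ := 1 + b * p with hq
    have hq3 : 3 ≤ q := by
      have : p ≤ b * p := Nat.le_mul_of_pos_left p hb
      omega
    have hqb : q % b = 1 % b := Nat.add_mul_mod_self_left 1 b p
    have hpq : ¬ p ∣ q := by
      intro h
      have h1 : p ∣ b * p + 1 := by rwa [hq, add_comm] at h
      have h2 : p ∣ 1 := (Nat.dvd_add_right (dvd_mul_left p b)).mp h1
      exact LocalACM.not_p_dvd_one hp h2
    have hatom_p : acmAtom p (b * p) p := LocalACM.atom_p hp hpb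
    have hatom_qq : acmAtom p (b * p) (p * (q * q)) := by
      refine (LocalACM.atom_iff hp hpb _).mpr ⟨q * q, ?_, ?_, rfl⟩
      · intro h
        rcases (Nat.Prime.dvd_mul hp).mp h with h | h <;> exact hpq h
      · have h := Nat.ModEq.mul (hqb : q ≡ 1 [MOD b]) (hqb : q ≡ 1 [MOD b])
        simpa [Nat.ModEq] using h
    have hatom_q : acmAtom p (b * p) (p * q) :=
      (LocalACM.atom_iff hp hpb _).mpr ⟨q, hpq, hqb, rfl⟩
    set z₁ : Multiset ℕ := {p, p * (q * q)} with hz₁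
    set z₂ : Multiset ℕ := {p * q, p * q} with hz₂
    set x : ℕ := p * (p * (q * q)) with hxdef
    have hf₁ : acmFactorization p (b * p) x z₁ := by
      constructor
      · intro u hu
        rw [hz₁] at hu
        rcases Multiset.mem_cons.mp hu with rfl | hu
        · exact hatom_p
        · obtain rfl : u = p * (q * q) := by simpa using hu
          exact hatom_qq
      · simp [hz₁, hxdef]
    have hf₂ : acmFactorization p (b * p) x z₂ := by
      constructor
      · intro u hu
        rw [hz₂] at hu
        rcases Multiset.mem_cons.mp hu with rfl | hu
        · exact hatom_q
        · obtain rfl : u = p * q := by simpa using hu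
          exact hatom_q
      · simp [hz₂, hxdef]; ring
    have hmemx : acmMem p (b * p) x := by
      have := LocalACM.prod_mem hp hpb z₁ hf₁.1
      rwa [hf₁.2] at this
    obtain ⟨L, hne, hhd, hlast, hall, hch⟩ := hN x hmemx z₁ z₂ hf₁ hf₂
    have hch1 : L.Chain' (fun s t => facDist s t ≤ 1) :=
      List.IsChain.imp (fun a b h => le_trans h hN1) hch
    have heq : z₁ = z₂ := LocalACM.chain_const hp hpb L hall hch1 z₁ z₂ hhd hlast
    have hp_mem : p ∈ z₂ := by
      rw [← heq, hz₁]
      exact Multiset.mem_cons_self _ _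
    rw [hz₂] at hp_mem
    have : p = p * q := by
      rcases Multiset.mem_cons.mp hp_mem with h | h
      · exact h
      · simpa using h
    have : (1 : ℕ) = q := Nat.eq_of_mul_eq_mul_left hp.pos (by rw [mul_one]; exact this)
    omega
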